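/- Let A be a self-adjoint operator on a two-dimensional inner product space with eigenvalues μ > ν and eigenvector u (for either eigenvalue). For any linearly independent nonzero vectors x and y, |ρ(x) − ρ(y)| = (μ − ν)·sin(∠{x,u} + ∠{y,u})·|sin(∠{x,u} − ∠{y,u})|. -/

import Mathlib

open scoped RealInnerProductSpace
open Submodule

noncomputable section

variable {H : Type*} [NormedAddCommGroup H] [InnerProductSpace ℝ H]

/-- The Rayleigh quotient of `x` with respect to `A`. -/
def rq (A : H →L[ℝ] H) (x : H) : ℝ := ⟪x, A x⟫ / ⟪x, x⟫

/-- The residual of `x` with respect to `A`. -/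
def res (A : H →L[ℝ] H) (x : H) : H := A x - rq A x • x

/-- The acute angle between two vectors. -/
def ang (x y : H) : ℝ := Real.arccos (|⟪x, y⟫| / (‖x‖ * ‖y‖))

lemma ang_mem (x u : H) : ang x u ∈ Set.Icc 0 (Real.pi/2) := by
  refine ⟨Real.arccos_nonneg _, ?_⟩
  rw [ang, Real.arccos_le_pi_div_two]
  positivity

lemma sin_ang_sq (x u : H) (hu : ‖u‖ = 1) :
    Real.sin (ang x u) ^ 2 = 1 - ⟪x, u⟫ ^ 2 / ‖x‖ ^ 2 := by
  have ht : |⟪x, u⟫| / ‖x‖ ≤ 1 := by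
    rcases eq_or_ne x 0 with h | h
    · simp [h]
    · rw [div_le_one (norm_pos_iff.mpr h)]
      simpa [hu] using abs_real_inner_le_norm x u
  have ht0 : 0 ≤ |⟪x, u⟫| / ‖x‖ := by positivity
  rw [ang, hu, mul_one, Real.sin_arccos, Real.sq_sqrt (by nlinarith), div_pow, sq_abs]

lemma decomp [FiniteDimensional ℝ H] (hdim : Module.finrank ℝ H = 2)
    (u₁ u₂ : H) (hu₁ : ‖u₁‖ = 1) (hu₂ : ‖u₂‖ = 1) (horth : ⟪u₁, u₂⟫ = 0)
    (x : H) : x = ⟪x, u₁⟫ • u₁ + ⟪x, u₂⟫ • u₂ := by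
  have h11 : ⟪u₁, u₁⟫ = 1 := by rw [real_inner_self_eq_norm_sq, hu₁]; norm_num
  have h22 : ⟪u₂, u₂⟫ = 1 := by rw [real_inner_self_eq_norm_sq, hu₂]; norm_num
  have h21 : ⟪u₂, u₁⟫ = 0 := by rw [real_inner_comm]; exact horth
  have hon : Orthonormal ℝ ![u₁, u₂] := by
    rw [orthonormal_iff_ite]
    intro i j
    fin_cases i <;> fin_cases j <;> simp [h11, h22, h21, horth, hu₁, hu₂]
  have hsp : Submodule.span ℝ (Set.range ![u₁, u₂]) = ⊤ := by
    apply Submodule.eq_top_of_finrank_eq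
    rw [finrank_span_eq_card hon.linearIndependent, hdim]
    simp
  set w := x - ⟪x, u₁⟫ • u₁ - ⟪x, u₂⟫ • u₂ with hw
  have h1 : ⟪u₁, w⟫ = 0 := by
    simp [hw, inner_sub_right, inner_smul_right, h11, horth, real_inner_comm x u₁, hu₁]
  have h2 : ⟪u₂, w⟫ = 0 := by
    simp [hw, inner_sub_right, inner_smul_right, h22, h21, real_inner_comm x u₂, hu₂]
  have hwmem : w ∈ Submodule.span ℝ (Set.range ![u₁, u₂]) := by
    rw [hsp]; trivial
  have hrange : Set.range ![u₁, u₂] = {u₁, u₂} := by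
    ext v; simp [Fin.exists_fin_two]; tauto
  rw [hrange, Submodule.mem_span_pair] at hwmem
  obtain ⟨α, β, hab⟩ := hwmem
  have hα : α = 0 := by
    have := h1
    rw [← hab, inner_add_right, inner_smul_right, inner_smul_right, h11, horth] at this
    linarith
  have hβ : β = 0 := by
    have := h2
    rw [← hab, inner_add_right, inner_smul_right, inner_smul_right, h21, h22] at this
    linarith
  have hw0 : w = 0 := by rw [← hab, hα, hβ]; simp
  rw [hw, sub_sub, sub_eq_zero] at hw0
  exact hw0

lemma sin_mul_sin (θ φ : ℝ) :
    Real.sin (θ + φ) * Real.sin (θ - φ) = Real.sin θ ^ 2 - Real.sin φ ^ 2 := by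
  rw [Real.sin_add, Real.sin_sub]
  have h1 := Real.sin_sq_add_cos_sq θ
  have h2 := Real.sin_sq_add_cos_sq φ
  nlinarith [h1, h2]

lemma rq_eq [FiniteDimensional ℝ H] (hdim : Module.finrank ℝ H = 2)
    (A : H →L[ℝ] H) (μ ν : ℝ)
    (u₁ u₂ : H) (hu₁ : ‖u₁‖ = 1) (hu₂ : ‖u₂‖ = 1) (horth : ⟪u₁, u₂⟫ = 0)
    (he₁ : A u₁ = μ • u₁) (he₂ : A u₂ = ν • u₂) (x : H) (hx : x ≠ 0) :
    rq A x = μ - (μ - ν) * Real.sin (ang x u₁) ^ 2 ∧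
      rq A x = ν + (μ - ν) * Real.sin (ang x u₂) ^ 2 := by
  have h11 : ⟪u₁, u₁⟫ = 1 := by rw [real_inner_self_eq_norm_sq, hu₁]; norm_num
  have h22 : ⟪u₂, u₂⟫ = 1 := by rw [real_inner_self_eq_norm_sq, hu₂]; norm_num
  have h21 : ⟪u₂, u₁⟫ = 0 := by rw [real_inner_comm]; exact horth
  set a := ⟪x, u₁⟫ with ha
  set b := ⟪x, u₂⟫ with hb
  have hxd : x = a • u₁ + b • u₂ := decomp hdim u₁ u₂ hu₁ hu₂ horth x
  have hAx : A x = (a * μ) • u₁ + (b * ν) • u₂ := by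
    rw [hxd]
    simp [he₁, he₂, smul_smul]
  have hs : ⟪x, x⟫ = a ^ 2 + b ^ 2 := by
    conv_lhs => rw [hxd]
    rw [inner_add_left, inner_add_right, inner_add_right]
    simp [inner_smul_left, inner_smul_right, h11, h22, h21, horth, norm_smul, hu₁, hu₂]
  have hxAx : ⟪x, A x⟫ = a ^ 2 * μ + b ^ 2 * ν := by
    conv_lhs => rw [hAx, hxd]
    rw [inner_add_left, inner_add_right, inner_add_right]
    simp [inner_smul_left, inner_smul_right, h11, h22, h21, horth, hu₁, hu₂]
    ring
  have hn : ‖x‖ ^ 2 = a ^ 2 + b ^ 2 := by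
    rw [← real_inner_self_eq_norm_sq, hs]
  have hs0 : a ^ 2 + b ^ 2 ≠ 0 := by
    rw [← hs]
    exact inner_self_ne_zero.mpr hx
  have hsin1 : Real.sin (ang x u₁) ^ 2 = 1 - a ^ 2 / (a ^ 2 + b ^ 2) := by
    rw [sin_ang_sq x u₁ hu₁, hn, ha]
  have hsin2 : Real.sin (ang x u₂) ^ 2 = 1 - b ^ 2 / (a ^ 2 + b ^ 2) := by
    rw [sin_ang_sq x u₂ hu₂, hn, hb]
  constructor <;> rw [rq, hs, hxAx]
  · rw [hsin1]; field_simp; ring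
  · rw [hsin2]; field_simp; ring

theorem stmt_9 [FiniteDimensional ℝ H] (hdim : Module.finrank ℝ H = 2)
    (A : H →L[ℝ] H) (hA : IsSelfAdjoint A)
    (μ ν : ℝ) (hμν : ν < μ) (u₁ u₂ : H) (hu₁ : ‖u₁‖ = 1) (hu₂ : ‖u₂‖ = 1)
    (horth : ⟪u₁, u₂⟫ = 0) (he₁ : A u₁ = μ • u₁) (he₂ : A u₂ = ν • u₂)
    (u : H) (hu : u = u₁ ∨ u = u₂)
    (x y : H) (hx : x ≠ 0) (hy : y ≠ 0) (hli : LinearIndependent ℝ ![x, y]) :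
    |rq A x - rq A y|
      = (μ - ν) * Real.sin (ang x u + ang y u) * |Real.sin (ang x u - ang y u)| := by
  obtain ⟨hx1, hx2⟩ := rq_eq hdim A μ ν u₁ u₂ hu₁ hu₂ horth he₁ he₂ x hx
  obtain ⟨hy1, hy2⟩ := rq_eq hdim A μ ν u₁ u₂ hu₁ hu₂ horth he₁ he₂ y hy
  obtain ⟨hθ0, hθ1⟩ := ang_mem x u
  obtain ⟨hφ0, hφ1⟩ := ang_mem y u
  have hsnn : 0 ≤ Real.sin (ang x u + ang y u) := by
    apply Real.sin_nonneg_of_nonneg_of_le_pi (by linarith)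
    nlinarith [Real.pi_pos]
  have key : |rq A x - rq A y|
      = (μ - ν) * |Real.sin (ang x u) ^ 2 - Real.sin (ang y u) ^ 2| := by
    rcases hu with rfl | rfl
    · have h : rq A x - rq A y
          = (μ - ν) * (Real.sin (ang y u) ^ 2 - Real.sin (ang x u) ^ 2) := by
        rw [hx1, hy1]; ring
      rw [h, abs_mul, abs_of_pos (sub_pos.mpr hμν), abs_sub_comm]
    · have h : rq A x - rq A y
          = (μ - ν) * (Real.sin (ang x u) ^ 2 - Real.sin (ang y u) ^ 2) := by
        rw [hx2, hy2]; ring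
      rw [h, abs_mul, abs_of_pos (sub_pos.mpr hμν)]
  rw [key, mul_assoc, ← abs_of_nonneg hsnn, ← abs_mul, sin_mul_sin]
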